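/- arXiv:1803.10839 — 4 statements merged into one kernel-verified Lean document; each statement's English description precedes it below -/
import Mathlib

section
/- Let n ≥ 2, p ∈ ℝ, and let K ⊂ ℝ^n be a convex body containing the origin in its interior. If μ is a finite Borel measure on S^{n−1} equal to J_p(K,·) in the sense that μ({u}) = ρ_K(u)^p · H^{n−1}(α_K({u})) for every u ∈ S^{n−1} and μ(ω) ≥ the corresponding integral on every Borel ω (in particular μ(ω) = 0 forces H^{n−1}(α_K(ω)) = 0), then μ is not concentrated on any great subsphere: for every proper linear subspace W ⊂ ℝ^n one has H^{n−1}(α_K(S^{n−1} \ W)) > 0, hence μ(S^{n−1} \ W) > 0. -/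
open MeasureTheory Real Filter
open scoped InnerProductSpace ENNReal Topology Pointwise

noncomputable section

abbrev E (n : ℕ) := EuclideanSpace ℝ (Fin n)

def sph (n : ℕ) : Set (E n) := Metric.sphere 0 1

def suppFn {n : ℕ} (K : Set (E n)) (v : E n) : ℝ := sSup ((fun x => ⟪x, v⟫_ℝ) '' K)

def radFn {n : ℕ} (K : Set (E n)) (u : E n) : ℝ := sSup {r : ℝ | 0 ≤ r ∧ r • u ∈ K}

def rgi {n : ℕ} (K ω : Set (E n)) : Set (E n) :=
  {v | v ∈ sph n ∧ ∃ u ∈ ω, ⟪v, radFn K u • u⟫_ℝ = suppFn K v}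

def hm (n : ℕ) : Measure (E n) := μH[(n : ℝ) - 1]

def entropy {n : ℕ} (Q : Set (E n)) : ℝ := -∫ v in sph n, Real.log (suppFn Q v) ∂(hm n)

def ballVol (m : ℕ) : ℝ := (volume (Metric.ball (0 : E m) 1)).toReal

def Phi {n N : ℕ} (p : ℝ) (u : Fin N → E n) (w : Fin N → ℝ) (Q : Set (E n)) : ℝ :=
  (1 / (n * ballVol n)) * entropy Q
    - (1 / p) * Real.log (2 * ∑ i, radFn Q (u i) ^ (-p) * w i)

def Dmu {n N : ℕ} (u : Fin N → E n) : Set (Set (E n)) :=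
  {Q | ∃ ρ : Fin N → ℝ, (∀ i, 0 < ρ i) ∧
    Q = convexHull ℝ (⋃ i, ({ρ i • u i, -(ρ i • u i)} : Set (E n)))}

set_option maxHeartbeats 1000000 in
lemma cap_hm_pos {n : ℕ} (hn : 2 ≤ n) (w : E n) (hw : ‖w‖ = 1) {ε : ℝ} (hε : 0 < ε) :
    0 < hm n {v | v ∈ sph n ∧ ‖v - w‖ < ε} := by
  classical
  set C : Set (E n) := {v | v ∈ sph n ∧ ‖v - w‖ < ε} with hC
  have hw0 : w ≠ 0 := by
    intro h; rw [h, norm_zero] at hw; norm_num at hw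
  set V := (ℝ ∙ w)ᗮ with hV
  set m := Module.finrank ℝ V with hmdef
  have hmn : m + 1 = n := by
    have h1 : Module.finrank ℝ (ℝ ∙ w) = 1 := finrank_span_singleton hw0
    have h2 := Submodule.finrank_add_finrank_orthogonal (K := (ℝ ∙ w))
    rw [h1, finrank_euclideanSpace_fin] at h2
    rw [hmdef, hV]
    omega
  have hd0 : (0:ℝ) ≤ (n:ℝ) - 1 := by
    have : (2:ℝ) ≤ (n:ℝ) := by exact_mod_cast hn
    linarith
  set b := stdOrthonormalBasis ℝ V with hb
  set f : E n → (Fin m → ℝ) :=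
    fun x => (WithLp.equiv 2 (Fin m → ℝ)) (b.repr (V.orthogonalProjectionOnto x)) with hf
  have hlip : LipschitzWith 1 f := by
    have l1 : LipschitzWith 1 (fun x : E n => (V.orthogonalProjectionOnto x : V)) := by
      apply LipschitzWith.of_dist_le_mul
      intro x y
      rw [NNReal.coe_one, one_mul, dist_eq_norm, dist_eq_norm, ← map_sub]
      calc ‖V.orthogonalProjectionOnto (x - y)‖
          ≤ ‖V.orthogonalProjectionOnto‖ * ‖x - y‖ := (V.orthogonalProjectionOnto).le_opNorm _
        _ ≤ 1 * ‖x - y‖ := by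
            gcongr
            exact Submodule.orthogonalProjectionOnto_norm_le V
        _ = ‖x - y‖ := one_mul _
    have l2 : LipschitzWith 1 (⇑b.repr) := b.repr.isometry.lipschitz
    have l3 : LipschitzWith 1 (⇑(WithLp.equiv 2 (Fin m → ℝ))) := PiLp.lipschitzWith_ofLp 2 _
    convert (l3.comp (l2.comp l1)) using 1
    · simp
    · rw [hf]; rfl
  set c : ℝ := (m : ℝ) + 1 with hcdef
  have hc : 0 < c := by positivity
  set δ : ℝ := min (ε / (2 * c)) (1 / (2 * c)) with hδdef
  have hδ : 0 < δ := lt_min (by positivity) (by positivity)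
  have hball : Metric.ball (0 : Fin m → ℝ) δ ⊆ f '' C := by
    intro x hx
    have hxδ : ‖x‖ < δ := by simpa [Metric.mem_ball, dist_zero_right] using hx
    set y : V := b.repr.symm ((WithLp.equiv 2 (Fin m → ℝ)).symm x) with hy
    have hyrepr : (WithLp.equiv 2 (Fin m → ℝ)) (b.repr y) = x := by
      rw [hy]; simp
    have hyn : ‖y‖ ≤ c * δ := by
      have h1 : ‖y‖ = ‖(WithLp.equiv 2 (Fin m → ℝ)).symm x‖ := b.repr.symm.norm_map _
      have h2 : ‖(WithLp.equiv 2 (Fin m → ℝ)).symm x‖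
          = Real.sqrt (∑ i, ‖x i‖ ^ 2) := by
        rw [EuclideanSpace.norm_eq]
        congr 1
      have h3 : ∑ i, ‖x i‖ ^ 2 ≤ (m : ℝ) * δ ^ 2 := by
        calc ∑ i : Fin m, ‖x i‖ ^ 2 ≤ ∑ _i : Fin m, δ ^ 2 := by
              apply Finset.sum_le_sum
              intro i _
              have := norm_le_pi_norm x i
              have hxi : ‖x i‖ ≤ δ := le_of_lt (lt_of_le_of_lt this hxδ)
              exact pow_le_pow_left₀ (norm_nonneg _) hxi 2
          _ = (m : ℝ) * δ ^ 2 := by simp [Finset.sum_const, nsmul_eq_mul]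
      have h4 : Real.sqrt (∑ i, ‖x i‖ ^ 2) ≤ Real.sqrt ((m:ℝ) * δ ^ 2) :=
        Real.sqrt_le_sqrt h3
      have h5 : Real.sqrt ((m:ℝ) * δ ^ 2) ≤ c * δ := by
        rw [show (m:ℝ) * δ ^ 2 = ((Real.sqrt m) * δ)^2 by
              rw [mul_pow, Real.sq_sqrt (by positivity)]]
        rw [Real.sqrt_sq (by positivity)]
        have : Real.sqrt (m:ℝ) ≤ c := by
          rw [hcdef]
          nlinarith [Real.sq_sqrt (show (0:ℝ) ≤ m by positivity),
            Real.sqrt_nonneg (m:ℝ), Nat.cast_nonneg (α := ℝ) m]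
        nlinarith
      rw [h1, h2]; exact h4.trans h5
    have hyhalf : ‖y‖ ≤ 1 / 2 := by
      have : c * δ ≤ c * (1 / (2 * c)) := by
        apply mul_le_mul_of_nonneg_left (min_le_right _ _) hc.le
      have h2 : c * (1 / (2 * c)) = 1 / 2 := by field_simp
      exact hyn.trans (this.trans (le_of_eq h2))
    have hyε : ‖y‖ ≤ ε / 2 := by
      have : c * δ ≤ c * (ε / (2 * c)) := by
        apply mul_le_mul_of_nonneg_left (min_le_left _ _) hc.le
      have h2 : c * (ε / (2 * c)) = ε / 2 := by field_simp
      exact hyn.trans (this.trans (le_of_eq h2))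
    clear_value y
    have hyy : 0 ≤ ‖y‖ := norm_nonneg y
    set s : ℝ := Real.sqrt (1 - ‖y‖ ^ 2) with hs
    have hy2 : ‖y‖ ^ 2 ≤ 1 := by nlinarith
    have hs0 : 0 ≤ s := Real.sqrt_nonneg _
    have hs2 : s ^ 2 = 1 - ‖y‖ ^ 2 := Real.sq_sqrt (by linarith)
    have hs1 : s ≤ 1 := by nlinarith
    clear_value s
    set v : E n := s • w + (y : E n) with hv
    have horth : ⟪w, (y : E n)⟫_ℝ = 0 :=
      (Submodule.mem_orthogonal _ _).1 y.2 w (Submodule.mem_span_singleton_self w)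
    have hnsw : ‖s • w‖ ^ 2 = s ^ 2 := by
      rw [norm_smul, hw, mul_one, Real.norm_eq_abs, sq_abs]
    have hinner : ⟪s • w, (y : E n)⟫_ℝ = 0 := by
      rw [real_inner_smul_left, horth, mul_zero]
    have hnv2 : ‖v‖ ^ 2 = 1 := by
      rw [hv, @norm_add_sq_real, hnsw, hinner, hs2]
      have : ‖(y : E n)‖ = ‖y‖ := rfl
      rw [this]; ring
    have hnv : ‖v‖ = 1 := by
      have := Real.sqrt_sq (norm_nonneg v)
      rw [← this, hnv2, Real.sqrt_one]
    have hvsph : v ∈ sph n := by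
      simpa [sph, mem_sphere_zero_iff_norm] using hnv
    have hvw : ‖v - w‖ < ε := by
      have hsub : v - w = (s - 1) • w + (y : E n) := by
        rw [hv]; module
      have hn2 : ‖v - w‖ ^ 2 = (s - 1) ^ 2 + ‖y‖ ^ 2 := by
        rw [hsub, @norm_add_sq_real, norm_smul, hw, real_inner_smul_left, horth]
        have hyc : ‖(y : E n)‖ = ‖y‖ := rfl
        rw [hyc, mul_one, mul_zero, Real.norm_eq_abs, sq_abs]
        ring
      have hkey : (s - 1) ^ 2 ≤ ‖y‖ ^ 2 := by nlinarith [hyy]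
      have : ‖v - w‖ ^ 2 < ε ^ 2 := by
        rw [hn2]; nlinarith [hyy]
      exact lt_of_pow_lt_pow_left₀ 2 hε.le this
    refine ⟨v, ⟨hvsph, hvw⟩, ?_⟩
    have hproj : V.orthogonalProjectionOnto v = y := by
      have hp1 : V.orthogonalProjectionOnto w = 0 :=
        Submodule.orthogonalProjectionOnto_orthogonalComplement_singleton_eq_zero w
      have hp2 : V.orthogonalProjectionOnto ((y : E n)) = y :=
        Submodule.orthogonalProjectionOnto_mem_subspace_eq_self y
      rw [hv, map_add, _root_.map_smul, hp1, hp2, smul_zero, zero_add]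
    rw [hf]
    simp only [hproj]
    exact hyrepr
  have hcast : ((n : ℝ) - 1) = ((m : ℕ) : ℝ) := by
    have : ((m : ℝ) + 1) = (n : ℝ) := by exact_mod_cast hmn
    linarith
  have hvol : (0:ℝ≥0∞) < (μH[(n:ℝ)-1] : Measure (Fin m → ℝ)) (Metric.ball 0 δ) := by
    rw [hcast]
    have hpi : (μH[(m:ℝ)] : Measure (Fin m → ℝ)) = volume := by
      have := hausdorffMeasure_pi_real (ι := Fin m)
      simpa using this
    rw [hpi]
    exact Metric.measure_ball_pos _ _ hδ
  have himg := hlip.hausdorffMeasure_image_le hd0 C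
  simp only [ENNReal.coe_one, ENNReal.one_rpow, one_mul] at himg
  show (0:ℝ≥0∞) < (μH[(n:ℝ)-1] : Measure (E n)) C
  exact lt_of_lt_of_le hvol (le_trans (measure_mono hball) himg)

set_option maxHeartbeats 1000000 in
/-- necessity: if a finite Borel measure `μ` is the `L_p` Aleksandrov
integral curvature of a convex body `K` containing the origin in its interior, then `μ` cannot be
concentrated on any great subsphere. -/
theorem lp_aleksandrov_not_concentrated {n : ℕ} (hn : 2 ≤ n) (p : ℝ)
    (K : Set (E n)) (hKcomp : IsCompact K) (hKconv : Convex ℝ K) (h0 : 0 ∈ interior K)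
    (μ : Measure (E n)) [IsFiniteMeasure μ]
    (h1 : ∀ v ∈ sph n, μ {v} = ENNReal.ofReal (radFn K v ^ p) * hm n (rgi K {v}))
    (h2 : ∀ ω : Set (E n), MeasurableSet ω → μ ω = 0 → hm n (rgi K ω) = 0) :
    ∀ W : Submodule ℝ (E n), W ≠ ⊤ →
      0 < hm n (rgi K (sph n \ (W : Set (E n)))) ∧ 0 < μ (sph n \ (W : Set (E n))) := by
  intro W hW
  have h0K : (0 : E n) ∈ K := interior_subset h0
  obtain ⟨r, hr, hball⟩ : ∃ r > 0, Metric.ball (0 : E n) r ⊆ K := by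
    rcases Metric.isOpen_iff.1 isOpen_interior 0 h0 with ⟨r, hr, h⟩
    exact ⟨r, hr, h.trans interior_subset⟩
  obtain ⟨R, hR0, hRK⟩ : ∃ R : ℝ, 0 ≤ R ∧ ∀ x ∈ K, ‖x‖ ≤ R := by
    obtain ⟨R, hR⟩ := hKcomp.isBounded.exists_norm_le
    exact ⟨max R 0, le_max_right _ _, fun x hx => (hR x hx).trans (le_max_left _ _)⟩
  have hWbot : Wᗮ ≠ ⊥ := fun h => hW (Submodule.orthogonal_eq_bot_iff.1 h)
  obtain ⟨x0, hx0W, hx00⟩ := Submodule.exists_mem_ne_zero_of_ne_bot hWbot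
  have hx0n : ‖x0‖ ≠ 0 := norm_ne_zero_iff.2 hx00
  set w : E n := ‖x0‖⁻¹ • x0 with hwdef
  have hwnorm : ‖w‖ = 1 := by
    rw [hwdef, norm_smul, norm_inv, norm_norm, inv_mul_cancel₀ hx0n]
  have hwW : w ∈ Wᗮ := Submodule.smul_mem _ _ hx0W
  set ε : ℝ := (r / 2) / (R + 1) with hεdef
  have hεpos : 0 < ε := by positivity
  have hεe : ε * (R + 1) = r / 2 := by rw [hεdef]; field_simp
  set C : Set (E n) := {v | v ∈ sph n ∧ ‖v - w‖ < ε} with hC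
  have hsub : C ⊆ rgi K (sph n \ (W : Set (E n))) := by
    rintro v ⟨hvs, hvw⟩
    have hv1 : ‖v‖ = 1 := by simpa [sph, mem_sphere_zero_iff_norm] using hvs
    have hcont : Continuous fun y : E n => ⟪y, v⟫_ℝ := by
      exact Continuous.inner continuous_id continuous_const
    obtain ⟨x₀, hx₀K, hx₀max⟩ :=
      hKcomp.exists_isMaxOn ⟨0, h0K⟩ hcont.continuousOn
    have hmax : ∀ z ∈ K, ⟪z, v⟫_ℝ ≤ ⟪x₀, v⟫_ℝ := fun z hz => isMaxOn_iff.1 hx₀max z hz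
    have hgreat : IsGreatest ((fun x => ⟪x, v⟫_ℝ) '' K) ⟪x₀, v⟫_ℝ :=
      ⟨⟨x₀, hx₀K, rfl⟩, by rintro _ ⟨z, hz, rfl⟩; exact hmax z hz⟩
    have hsupp : suppFn K v = ⟪x₀, v⟫_ℝ := hgreat.csSup_eq
    have hrv : (r/2) • v ∈ K := by
      apply hball
      rw [mem_ball_zero_iff, norm_smul, hv1, mul_one, Real.norm_eq_abs,
        abs_of_nonneg (by linarith)]
      linarith
    have hlow : r / 2 ≤ ⟪x₀, v⟫_ℝ := by
      have h1 : ⟪(r/2) • v, v⟫_ℝ = r/2 := by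
        rw [real_inner_smul_left, real_inner_self_eq_norm_sq, hv1]; ring
      have := hmax _ hrv
      linarith
    have hx₀W : x₀ ∉ (W : Set (E n)) := by
      intro hmem
      have hiw : ⟪x₀, w⟫_ℝ = 0 := (Submodule.mem_orthogonal _ _).1 hwW x₀ hmem
      have hsplit : ⟪x₀, v⟫_ℝ = ⟪x₀, w⟫_ℝ + ⟪x₀, v - w⟫_ℝ := by
        rw [← inner_add_right]
        congr 1
        abel
      have hcs : ⟪x₀, v - w⟫_ℝ ≤ R * ε := by
        calc ⟪x₀, v - w⟫_ℝ ≤ ‖x₀‖ * ‖v - w‖ := real_inner_le_norm _ _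
          _ ≤ R * ε := mul_le_mul (hRK _ hx₀K) hvw.le (norm_nonneg _) hR0
      have hRε : R * ε < r / 2 := by nlinarith
      linarith
    have hx₀0 : x₀ ≠ 0 := fun h => hx₀W (h ▸ W.zero_mem)
    have hx₀pos : 0 < ‖x₀‖ := norm_pos_iff.2 hx₀0
    set u : E n := ‖x₀‖⁻¹ • x₀ with hu
    have hun : ‖u‖ = 1 := by
      rw [hu, norm_smul, norm_inv, norm_norm, inv_mul_cancel₀ hx₀pos.ne']
    have husph : u ∈ sph n := by simpa [sph, mem_sphere_zero_iff_norm] using hun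
    have hxu : ‖x₀‖ • u = x₀ := by
      rw [hu, smul_smul, mul_inv_cancel₀ hx₀pos.ne', one_smul]
    have huW : u ∉ (W : Set (E n)) := by
      intro h
      exact hx₀W (hxu ▸ W.smul_mem ‖x₀‖ h)
    set S : Set ℝ := {t : ℝ | 0 ≤ t ∧ t • u ∈ K} with hS
    have hSx : ‖x₀‖ ∈ S := ⟨norm_nonneg _, by rw [hxu]; exact hx₀K⟩
    have hSbdd : BddAbove S := by
      refine ⟨R, fun t ht => ?_⟩
      have := hRK _ ht.2
      rwa [norm_smul, hun, mul_one, Real.norm_eq_abs, abs_of_nonneg ht.1] at this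
    have hSclosed : IsClosed S := by
      have hset : S = Set.Ici (0:ℝ) ∩ (fun t : ℝ => t • u) ⁻¹' K := by
        ext t; simp [hS, Set.mem_Ici]
      rw [hset]
      exact isClosed_Ici.inter (hKcomp.isClosed.preimage (by continuity))
    have hρmem : radFn K u ∈ S := hSclosed.csSup_mem ⟨_, hSx⟩ hSbdd
    have hρge : ‖x₀‖ ≤ radFn K u := le_csSup hSbdd hSx
    have hup : ⟪radFn K u • u, v⟫_ℝ ≤ ⟪x₀, v⟫_ℝ := hmax _ hρmem.2
    have hlo : ⟪x₀, v⟫_ℝ ≤ ⟪radFn K u • u, v⟫_ℝ := by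
      have hh1 : ⟪radFn K u • u, v⟫_ℝ = (radFn K u * ‖x₀‖⁻¹) * ⟪x₀, v⟫_ℝ := by
        rw [hu, smul_smul, real_inner_smul_left]
      have hh2 : (1:ℝ) ≤ radFn K u * ‖x₀‖⁻¹ := by
        rw [← div_eq_mul_inv]
        exact (one_le_div hx₀pos).2 hρge
      nlinarith
    refine ⟨hvs, u, ⟨husph, huW⟩, ?_⟩
    rw [real_inner_comm, hsupp]
    exact le_antisymm hup hlo
  have hpos : 0 < hm n (rgi K (sph n \ (W : Set (E n)))) :=
    lt_of_lt_of_le (cap_hm_pos hn w hwnorm hεpos) (measure_mono hsub)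
  refine ⟨hpos, ?_⟩
  rw [pos_iff_ne_zero]
  intro hzero
  have hmeas : MeasurableSet (sph n \ (W : Set (E n))) := by
    exact (Metric.isClosed_sphere.measurableSet).diff
      (Submodule.closed_of_finiteDimensional W).measurableSet
  have := h2 _ hmeas hzero
  rw [this] at hpos
  exact lt_irrefl 0 hpos
end
end

section
/- Let n ≥ 2 and p ≠ 0. Let μ be an even discrete measure on S^{n−1} with support {±u_1,…,±u_N} (u_1,…,u_N spanning ℝ^n) and weights μ_i > 0. For an origin-symmetric convex body Q containing the origin in its interior, set Q̃ = conv{±ρ_Q(u_1)u_1,…,±ρ_Q(u_N)u_N} ∈ D_μ. Then h_{Q̃}(v) ≤ h_Q(v) for all v ∈ S^{n−1}, ρ_{Q̃}(u_i) ≥ ρ_Q(u_i) for each i, and consequently Φ(Q) ≤ Φ(Q̃). In particular, sup{Φ(Q) : Q ∈ D_μ} = sup{Φ(Q) : Q an origin-symmetric convex body containing the origin in its interior}. -/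
open MeasureTheory Real Filter
open scoped InnerProductSpace ENNReal Topology Pointwise

noncomputable section

open scoped NNReal

namespace Aux

variable {n : ℕ}

lemma bddAbove_inner_image {K : Set (E n)} {R : ℝ} (hK : K ⊆ Metric.closedBall 0 R) (v : E n) :
    BddAbove ((fun x => ⟪x, v⟫_ℝ) '' K) := by
  refine ⟨R * ‖v‖, ?_⟩
  rintro _ ⟨x, hx, rfl⟩
  have hxR : ‖x‖ ≤ R := by simpa using hK hx
  calc ⟪x, v⟫_ℝ ≤ ‖x‖ * ‖v‖ := real_inner_le_norm x v
    _ ≤ R * ‖v‖ := by nlinarith [norm_nonneg v, norm_nonneg x]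

lemma le_suppFn {K : Set (E n)} {R : ℝ} (hK : K ⊆ Metric.closedBall 0 R) {x : E n}
    (hx : x ∈ K) (v : E n) : ⟪x, v⟫_ℝ ≤ suppFn K v :=
  le_csSup (bddAbove_inner_image hK v) ⟨x, hx, rfl⟩

lemma suppFn_le {K : Set (E n)} (hne : K.Nonempty) {v : E n} {c : ℝ}
    (h : ∀ x ∈ K, ⟪x, v⟫_ℝ ≤ c) : suppFn K v ≤ c := by
  refine csSup_le (hne.image _) ?_
  rintro _ ⟨x, hx, rfl⟩; exact h x hx

lemma suppFn_mono {K₁ K₂ : Set (E n)} {R : ℝ} (h12 : K₁ ⊆ K₂) (hne : K₁.Nonempty)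
    (hK : K₂ ⊆ Metric.closedBall 0 R) (v : E n) : suppFn K₁ v ≤ suppFn K₂ v :=
  csSup_le_csSup (bddAbove_inner_image hK v) (hne.image _) (Set.image_mono h12)

lemma suppFn_le_of_sphere {K : Set (E n)} {R : ℝ} (hne : K.Nonempty)
    (hK : K ⊆ Metric.closedBall 0 R) {v : E n} (hv : ‖v‖ = 1) : suppFn K v ≤ R := by
  refine suppFn_le hne fun x hx => ?_
  have hxR : ‖x‖ ≤ R := by simpa using hK hx
  calc ⟪x, v⟫_ℝ ≤ ‖x‖ * ‖v‖ := real_inner_le_norm x v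
    _ ≤ R := by rw [hv]; simpa using hxR

lemma ball_le_suppFn {K : Set (E n)} {R ε : ℝ} (hK : K ⊆ Metric.closedBall 0 R)
    (hε : 0 < ε) (hball : Metric.ball (0 : E n) ε ⊆ K) {v : E n} (hv : ‖v‖ = 1) :
    ε / 2 ≤ suppFn K v := by
  have hmem : (ε / 2) • v ∈ K := by
    apply hball
    simp only [Metric.mem_ball, dist_zero_right, norm_smul, hv, mul_one]
    rw [Real.norm_eq_abs, abs_of_pos (by linarith)]; linarith
  have := le_suppFn hK hmem v
  rwa [real_inner_smul_left, real_inner_self_eq_norm_sq, hv, one_pow, mul_one] at this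

lemma suppFn_lipschitz {K : Set (E n)} {R : ℝ} (hne : K.Nonempty)
    (hK : K ⊆ Metric.closedBall 0 R) : LipschitzWith R.toNNReal (suppFn K) := by
  have key : ∀ v v' : E n, suppFn K v ≤ suppFn K v' + R * ‖v - v'‖ := by
    intro v v'
    refine suppFn_le hne fun x hx => ?_
    have h1 : ⟪x, v⟫_ℝ = ⟪x, v'⟫_ℝ + ⟪x, v - v'⟫_ℝ := by rw [inner_sub_right]; ring
    have h2 : ⟪x, v - v'⟫_ℝ ≤ ‖x‖ * ‖v - v'‖ := real_inner_le_norm _ _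
    have hxR : ‖x‖ ≤ R := by simpa using hK hx
    have h3 := le_suppFn hK hx v'
    nlinarith [norm_nonneg (v - v'), norm_nonneg x]
  have hR : 0 ≤ R := by
    obtain ⟨x, hx⟩ := hne
    exact le_trans (norm_nonneg x) (by simpa using hK hx)
  refine LipschitzWith.of_dist_le_mul fun v v' => ?_
  rw [Real.dist_eq, Real.coe_toNNReal _ hR, dist_eq_norm]
  rw [abs_sub_le_iff]
  constructor
  · have := key v v'; linarith
  · have := key v' v; rw [norm_sub_rev] at this; linarith

lemma suppFn_continuous {K : Set (E n)} {R : ℝ} (hne : K.Nonempty)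
    (hK : K ⊆ Metric.closedBall 0 R) : Continuous (suppFn K) :=
  (suppFn_lipschitz hne hK).continuous

end Aux

namespace Aux
variable {n : ℕ}

lemma radSet_bddAbove {K : Set (E n)} {R : ℝ} (hK : K ⊆ Metric.closedBall 0 R) {u : E n}
    (hu : ‖u‖ = 1) : BddAbove {r : ℝ | 0 ≤ r ∧ r • u ∈ K} := by
  refine ⟨R, ?_⟩
  rintro r ⟨hr0, hrK⟩
  have : ‖r • u‖ ≤ R := by simpa using hK hrK
  rwa [norm_smul, hu, mul_one, Real.norm_eq_abs, abs_of_nonneg hr0] at this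

lemma le_radFn {K : Set (E n)} {R : ℝ} (hK : K ⊆ Metric.closedBall 0 R) {u : E n}
    (hu : ‖u‖ = 1) {r : ℝ} (hr0 : 0 ≤ r) (hr : r • u ∈ K) : r ≤ radFn K u :=
  le_csSup (radSet_bddAbove hK hu) ⟨hr0, hr⟩

lemma radFn_pos {K : Set (E n)} {R : ℝ} (hK : K ⊆ Metric.closedBall 0 R) {u : E n}
    (hu : ‖u‖ = 1) (h0 : 0 ∈ interior K) : 0 < radFn K u := by
  obtain ⟨ε, hε, hball⟩ := Metric.isOpen_iff.1 isOpen_interior 0 h0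
  have hmem : (ε / 2) • u ∈ K := by
    refine interior_subset (hball ?_)
    simp only [Metric.mem_ball, dist_zero_right, norm_smul, hu, mul_one, Real.norm_eq_abs,
      abs_of_pos (by linarith : (0:ℝ) < ε / 2)]
    linarith
  have := le_radFn hK hu (by linarith) hmem
  linarith

lemma radFn_smul_mem {K : Set (E n)} {R : ℝ} (hc : IsClosed K) (hK : K ⊆ Metric.closedBall 0 R)
    {u : E n} (hu : ‖u‖ = 1) (h0 : 0 ∈ K) : radFn K u • u ∈ K := by
  have hclosed : IsClosed {r : ℝ | 0 ≤ r ∧ r • u ∈ K} := by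
    have : {r : ℝ | 0 ≤ r ∧ r • u ∈ K} = Set.Ici 0 ∩ (fun r : ℝ => r • u) ⁻¹' K := rfl
    rw [this]
    exact isClosed_Ici.inter (hc.preimage (by continuity))
  have hne : {r : ℝ | 0 ≤ r ∧ r • u ∈ K}.Nonempty := ⟨0, le_refl 0, by simpa using h0⟩
  exact (hclosed.csSup_mem hne (radSet_bddAbove hK hu)).2

lemma symm_hull_neg {N : ℕ} (q : Fin N → E n) :
    -(convexHull ℝ (⋃ i, ({q i, -(q i)} : Set (E n)))) =
      convexHull ℝ (⋃ i, ({q i, -(q i)} : Set (E n))) := by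
  rw [← convexHull_neg]
  congr 1
  ext x
  simp only [Set.mem_neg, Set.mem_iUnion, Set.mem_insert_iff, Set.mem_singleton_iff]
  constructor
  · rintro ⟨i, h | h⟩
    · exact ⟨i, Or.inr (neg_eq_iff_eq_neg.1 h)⟩
    · exact ⟨i, Or.inl (neg_injective h)⟩
  · rintro ⟨i, h | h⟩
    · exact ⟨i, Or.inr (by rw [h])⟩
    · exact ⟨i, Or.inl (by rw [h, neg_neg])⟩

end Aux

namespace Aux2
open Aux
variable {n N : ℕ}

lemma zero_mem_of_symm {s : Set (E n)} (hconv : Convex ℝ s) {x : E n}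
    (hx : x ∈ s) (hx' : -x ∈ s) : (0 : E n) ∈ s := by
  have h := hconv hx hx' (by norm_num : (0:ℝ) ≤ 1/2) (by norm_num : (0:ℝ) ≤ 1/2) (by norm_num)
  simpa [smul_neg] using h

lemma interior_neg_set (s : Set (E n)) : interior (-s) = -interior s := by
  have h := Homeomorph.preimage_interior (Homeomorph.neg (E n)) (s := s)
  have h2 : (Homeomorph.neg (E n)) ⁻¹' s = -s := rfl
  have h3 : (Homeomorph.neg (E n)) ⁻¹' interior s = -interior s := rfl
  rw [h2, h3] at h
  exact h.symm

lemma zero_mem_interior_hull (hN : 0 < N) (q : Fin N → E n)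
    (hspan : Submodule.span ℝ (Set.range q) = ⊤) :
    (0 : E n) ∈ interior (convexHull ℝ (⋃ i, ({q i, -(q i)} : Set (E n)))) := by
  set s : Set (E n) := ⋃ i, ({q i, -(q i)} : Set (E n)) with hs
  set C := convexHull ℝ s with hC
  have hsub : s ⊆ C := subset_convexHull ℝ s
  have hconv : Convex ℝ C := convex_convexHull ℝ s
  have hi0 : q ⟨0, hN⟩ ∈ s := Set.mem_iUnion.2 ⟨⟨0, hN⟩, Or.inl rfl⟩
  have hi0' : -q ⟨0, hN⟩ ∈ s := Set.mem_iUnion.2 ⟨⟨0, hN⟩, Or.inr rfl⟩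
  have h0C : (0 : E n) ∈ C := zero_mem_of_symm hconv (hsub hi0) (hsub hi0')
  have hspan_s : Submodule.span ℝ s = ⊤ := by
    rw [eq_top_iff, ← hspan]
    refine Submodule.span_mono ?_
    rintro _ ⟨i, rfl⟩
    exact Set.mem_iUnion.2 ⟨i, Or.inl rfl⟩
  have haff0 : affineSpan ℝ (insert (0 : E n) s) = ⊤ := by
    rw [← AffineSubspace.coe_eq_univ_iff, affineSpan_insert_zero, hspan_s]
    rfl
  have haff : affineSpan ℝ C = ⊤ := by
    rw [eq_top_iff, ← haff0]
    exact affineSpan_mono ℝ (Set.insert_subset h0C hsub)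
  obtain ⟨x, hx⟩ := (Convex.interior_nonempty_iff_affineSpan_eq_top hconv).2 haff
  have hxneg : -x ∈ interior C := by
    have : -x ∈ -interior C := Set.neg_mem_neg.2 hx
    rwa [← interior_neg_set, hC, symm_hull_neg q, ← hC] at this
  exact zero_mem_of_symm hconv.interior hx hxneg

end Aux2

namespace Aux3

lemma abs_coord_le_norm {n : ℕ} (x : E n) (k : Fin n) : |x k| ≤ ‖x‖ := by
  rw [EuclideanSpace.norm_eq, ← Real.sqrt_sq_eq_abs]
  apply Real.sqrt_le_sqrt
  have : x k ^ 2 = ‖x k‖ ^ 2 := by rw [Real.norm_eq_abs, sq_abs]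
  rw [this]
  exact Finset.single_le_sum (f := fun i => ‖x i‖ ^ 2) (fun i _ => by positivity)
    (Finset.mem_univ k)

lemma normalize_sub_le {n : ℕ} {x y : E n} (hx : 1 ≤ ‖x‖) (hy : 1 ≤ ‖y‖) (hxy : ‖x‖ ≤ ‖y‖) :
    ‖‖x‖⁻¹ • x - ‖y‖⁻¹ • y‖ ≤ 2 * ‖x - y‖ := by
  have hx0 : (0:ℝ) < ‖x‖ := lt_of_lt_of_le one_pos hx
  have hy0 : (0:ℝ) < ‖y‖ := lt_of_lt_of_le one_pos hy
  have key : ‖x‖⁻¹ • x - ‖y‖⁻¹ • y = ‖y‖⁻¹ • (x - y) + (‖x‖⁻¹ - ‖y‖⁻¹) • x := by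
    rw [smul_sub, sub_smul]; abel
  rw [key]
  have hinv : ‖y‖⁻¹ ≤ ‖x‖⁻¹ := by
    apply inv_anti₀ hx0 hxy
  have h1 : ‖‖y‖⁻¹ • (x - y)‖ = ‖y‖⁻¹ * ‖x - y‖ := by
    rw [norm_smul, Real.norm_eq_abs, abs_of_pos (by positivity)]
  have h2 : ‖(‖x‖⁻¹ - ‖y‖⁻¹) • x‖ = (‖x‖⁻¹ - ‖y‖⁻¹) * ‖x‖ := by
    rw [norm_smul, Real.norm_eq_abs, abs_of_nonneg (by linarith)]
  have h3 : (‖x‖⁻¹ - ‖y‖⁻¹) * ‖x‖ ≤ ‖y‖⁻¹ * ‖x - y‖ := by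
    have hxy2 : ‖y‖ - ‖x‖ ≤ ‖x - y‖ := by
      have := abs_norm_sub_norm_le x y
      rw [abs_sub_le_iff] at this
      linarith [this.2]
    have e1 : (‖x‖⁻¹ - ‖y‖⁻¹) * ‖x‖ = ‖y‖⁻¹ * ((‖y‖ - ‖x‖) * (‖x‖ * ‖x‖⁻¹)) := by
      field_simp
    rw [e1, mul_inv_cancel₀ (ne_of_gt hx0), mul_one]
    have : (0:ℝ) < ‖y‖⁻¹ := by positivity
    nlinarith
  have h4 : ‖y‖⁻¹ * ‖x - y‖ ≤ ‖x - y‖ := by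
    have h5 : ‖y‖⁻¹ ≤ 1 := by
      rw [inv_le_one_iff₀]; right; exact hy
    nlinarith [norm_nonneg (x - y)]
  calc ‖‖y‖⁻¹ • (x - y) + (‖x‖⁻¹ - ‖y‖⁻¹) • x‖
      ≤ ‖‖y‖⁻¹ • (x - y)‖ + ‖(‖x‖⁻¹ - ‖y‖⁻¹) • x‖ := norm_add_le _ _
    _ ≤ ‖y‖⁻¹ * ‖x - y‖ + ‖y‖⁻¹ * ‖x - y‖ := by rw [h1, h2]; linarith
    _ ≤ 2 * ‖x - y‖ := by linarith

lemma normalize_lipschitzOn {n : ℕ} {S : Set (E n)} (hS : ∀ x ∈ S, 1 ≤ ‖x‖) :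
    LipschitzOnWith 2 (fun x : E n => ‖x‖⁻¹ • x) S := by
  rw [lipschitzOnWith_iff_dist_le_mul]
  intro x hx y hy
  rw [dist_eq_norm, dist_eq_norm]
  have : ((2 : ℝ≥0) : ℝ) = 2 := by norm_num
  rw [this]
  rcases le_total ‖x‖ ‖y‖ with h | h
  · exact normalize_sub_le (hS x hx) (hS y hy) h
  · have := normalize_sub_le (hS y hy) (hS x hx) h
    rw [norm_sub_rev, norm_sub_rev y x] at this
    exact this

lemma face_lt_top {m : ℕ} (j : Fin (m + 1)) (s : ℝ) :
    μH[(m : ℝ)] {x : E (m+1) | x j = s ∧ ∀ k, |x k| ≤ 1} < ⊤ := by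
  set g : (Fin m → ℝ) → E (m+1) :=
    fun y => (WithLp.equiv 2 (Fin (m+1) → ℝ)).symm (j.insertNth s y) with hg
  have hglip : LipschitzWith (m+1 : ℝ≥0) g := by
    apply LipschitzWith.of_dist_le_mul
    intro y y'
    rw [dist_eq_norm]
    have hcoord : ∀ k : Fin (m+1), ‖(g y - g y') k‖ ≤ dist y y' := by
      intro k
      have he : (g y - g y') k = (j.insertNth s y : Fin (m+1) → ℝ) k - (j.insertNth s y' : Fin (m+1) → ℝ) k := by
        simp [hg, WithLp.equiv_symm_apply]
      rcases eq_or_ne k j with rfl | hkj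
      · rw [he, Fin.insertNth_apply_same, Fin.insertNth_apply_same, sub_self]
        simp [dist_nonneg]
      · obtain ⟨i, rfl⟩ := Fin.exists_succAbove_eq hkj
        rw [he, Fin.insertNth_apply_succAbove, Fin.insertNth_apply_succAbove]
        rw [Real.norm_eq_abs, ← Real.dist_eq]
        exact dist_le_pi_dist y y' i
    have hnorm : ‖g y - g y'‖ ≤ (m+1 : ℝ) * dist y y' := by
      rw [EuclideanSpace.norm_eq]
      have hb : ∑ k, ‖(g y - g y') k‖ ^ 2 ≤ ((m+1 : ℝ) * dist y y') ^ 2 := by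
        calc ∑ k, ‖(g y - g y') k‖ ^ 2 ≤ ∑ _k : Fin (m+1), dist y y' ^ 2 :=
              Finset.sum_le_sum fun k _ => by
                have := hcoord k
                nlinarith [norm_nonneg ((g y - g y') k), dist_nonneg (x := y) (y := y')]
          _ = (m+1 : ℝ) * dist y y' ^ 2 := by
              rw [Finset.sum_const, Finset.card_univ, Fintype.card_fin, nsmul_eq_mul]
              push_cast; ring
          _ ≤ ((m+1 : ℝ) * dist y y') ^ 2 := by
              have hd : (0:ℝ) ≤ dist y y' := dist_nonneg
              have hm : (1:ℝ) ≤ (m+1 : ℝ) := by push_cast; linarith [Nat.cast_nonneg (α := ℝ) m]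
              nlinarith
      calc √(∑ k, ‖(g y - g y') k‖ ^ 2) ≤ √(((m+1 : ℝ) * dist y y') ^ 2) :=
            Real.sqrt_le_sqrt hb
        _ = (m+1 : ℝ) * dist y y' := by
            rw [Real.sqrt_sq (by positivity)]
    calc ‖g y - g y'‖ ≤ (m+1 : ℝ) * dist y y' := hnorm
      _ = ((m+1 : ℝ≥0) : ℝ) * dist y y' := by push_cast; ring
  have hsub : {x : E (m+1) | x j = s ∧ ∀ k, |x k| ≤ 1} ⊆ g '' Metric.closedBall 0 1 := by
    rintro x ⟨hxj, hxk⟩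
    refine ⟨j.removeNth (fun k => x k), ?_, ?_⟩
    · rw [Metric.mem_closedBall, dist_pi_le_iff zero_le_one]
      intro i
      rw [Real.dist_eq]
      simpa [Fin.removeNth] using hxk (j.succAbove i)
    · have h1 : j.insertNth s (j.removeNth (fun k => x k)) = fun k => x k := by
        have := Fin.insertNth_self_removeNth j (fun k => x k)
        rwa [hxj] at this
      rw [hg]
      simp only [h1]
      rw [Equiv.symm_apply_eq]
      funext k
      rfl
  have hpi : (μH[(m : ℝ)] : Measure (Fin m → ℝ)) = volume := by
    have := hausdorffMeasure_pi_real (ι := Fin m)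
    rwa [Fintype.card_fin] at this
  calc μH[(m : ℝ)] {x : E (m+1) | x j = s ∧ ∀ k, |x k| ≤ 1}
      ≤ μH[(m : ℝ)] (g '' Metric.closedBall 0 1) := measure_mono hsub
    _ ≤ ((m+1 : ℝ≥0) : ℝ≥0∞) ^ (m : ℝ) * μH[(m : ℝ)] (Metric.closedBall (0 : Fin m → ℝ) 1) :=
        hglip.hausdorffMeasure_image_le (by positivity) _
    _ < ⊤ := by
        rw [hpi]
        exact ENNReal.mul_lt_top
          (ENNReal.rpow_lt_top_of_nonneg (by positivity) ENNReal.coe_ne_top)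
          measure_closedBall_lt_top

end Aux3

namespace Aux3

lemma sph_subset_cover {m : ℕ} :
    sph (m+1) ⊆ ⋃ j : Fin (m+1),
      ((fun x : E (m+1) => ‖x‖⁻¹ • x) '' {x | x j = 1 ∧ ∀ k, |x k| ≤ 1} ∪
       (fun x : E (m+1) => ‖x‖⁻¹ • x) '' {x | x j = -1 ∧ ∀ k, |x k| ≤ 1}) := by
  intro v hv
  have hv1 : ‖v‖ = 1 := by simpa [sph] using hv
  obtain ⟨j, -, hjmax⟩ := Finset.exists_max_image Finset.univ (fun k => |v k|)
    ⟨⟨0, Nat.succ_pos m⟩, Finset.mem_univ _⟩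
  have hjmax' : ∀ k, |v k| ≤ |v j| := fun k => hjmax k (Finset.mem_univ k)
  set c := |v j| with hc
  have hc0 : 0 < c := by
    rcases lt_or_ge 0 c with h | h
    · exact h
    · exfalso
      have hvk : ∀ k, v k = 0 := fun k =>
        abs_eq_zero.1 (le_antisymm (le_trans (hjmax' k) h) (abs_nonneg _))
      have : ‖v‖ = 0 := by
        rw [EuclideanSpace.norm_eq]
        simp [hvk]
      rw [hv1] at this; norm_num at this
  set x : E (m+1) := c⁻¹ • v with hx
  have hxk : ∀ k, x k = c⁻¹ * v k := fun k => rfl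
  have hxabs : ∀ k, |x k| ≤ 1 := by
    intro k
    rw [hxk, abs_mul, abs_inv, abs_of_pos hc0]
    rw [inv_mul_le_iff₀ hc0, mul_one]
    exact hjmax' k
  have hnx : ‖x‖ = c⁻¹ := by
    rw [hx, norm_smul, hv1, mul_one, Real.norm_eq_abs, abs_inv, abs_of_pos hc0]
  have hfx : ‖x‖⁻¹ • x = v := by
    rw [hnx, inv_inv, hx, smul_smul, mul_inv_cancel₀ (ne_of_gt hc0), one_smul]
  refine Set.mem_iUnion.2 ⟨j, ?_⟩
  rcases lt_or_ge (v j) 0 with hvj | hvj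
  · right
    refine ⟨x, ⟨?_, hxabs⟩, hfx⟩
    rw [hxk, hc, abs_of_neg hvj]
    have hne : v j ≠ 0 := ne_of_lt hvj
    field_simp
  · left
    have hvj' : 0 < v j := by
      rcases eq_or_lt_of_le hvj with h | h
      · exfalso; rw [hc, ← h, abs_zero] at hc0; exact lt_irrefl 0 hc0
      · exact h
    refine ⟨x, ⟨?_, hxabs⟩, hfx⟩
    rw [hxk, hc, abs_of_pos hvj']
    field_simp

lemma hm_sph_lt_top {n : ℕ} (hn : 2 ≤ n) : μH[(n : ℝ) - 1] (sph n) < ⊤ := by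
  obtain ⟨m, rfl⟩ : ∃ m, n = m + 1 := ⟨n - 1, by omega⟩
  have hde : ((m + 1 : ℕ) : ℝ) - 1 = (m : ℝ) := by push_cast; ring
  rw [hde]
  set f : E (m+1) → E (m+1) := fun x => ‖x‖⁻¹ • x with hf
  have himg : ∀ (j : Fin (m+1)) (s : ℝ), |s| = 1 →
      μH[(m : ℝ)] (f '' {x : E (m+1) | x j = s ∧ ∀ k, |x k| ≤ 1}) < ⊤ := by
    intro j s hs
    have hlip : LipschitzOnWith 2 f {x : E (m+1) | x j = s ∧ ∀ k, |x k| ≤ 1} := by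
      apply normalize_lipschitzOn
      rintro x ⟨hxj, -⟩
      calc (1:ℝ) = |x j| := by rw [hxj, hs]
        _ ≤ ‖x‖ := abs_coord_le_norm x j
    calc μH[(m : ℝ)] (f '' {x : E (m+1) | x j = s ∧ ∀ k, |x k| ≤ 1})
        ≤ ((2 : ℝ≥0) : ℝ≥0∞) ^ (m : ℝ) * μH[(m : ℝ)] {x : E (m+1) | x j = s ∧ ∀ k, |x k| ≤ 1} :=
          hlip.hausdorffMeasure_image_le (by positivity)
      _ < ⊤ := ENNReal.mul_lt_top
          (ENNReal.rpow_lt_top_of_nonneg (by positivity) ENNReal.coe_ne_top)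
          (face_lt_top j s)
  calc μH[(m : ℝ)] (sph (m+1))
      ≤ μH[(m : ℝ)] (⋃ j : Fin (m+1),
          (f '' {x : E (m+1) | x j = 1 ∧ ∀ k, |x k| ≤ 1} ∪
           f '' {x : E (m+1) | x j = -1 ∧ ∀ k, |x k| ≤ 1})) := measure_mono sph_subset_cover
    _ ≤ ∑' j : Fin (m+1), μH[(m : ℝ)]
          (f '' {x : E (m+1) | x j = 1 ∧ ∀ k, |x k| ≤ 1} ∪
           f '' {x : E (m+1) | x j = -1 ∧ ∀ k, |x k| ≤ 1}) := measure_iUnion_le _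
    _ = ∑ j : Fin (m+1), μH[(m : ℝ)]
          (f '' {x : E (m+1) | x j = 1 ∧ ∀ k, |x k| ≤ 1} ∪
           f '' {x : E (m+1) | x j = -1 ∧ ∀ k, |x k| ≤ 1}) := tsum_fintype _
    _ < ⊤ := by
        rw [ENNReal.sum_lt_top]
        intro j _
        calc μH[(m : ℝ)] (f '' {x : E (m+1) | x j = 1 ∧ ∀ k, |x k| ≤ 1} ∪
              f '' {x : E (m+1) | x j = -1 ∧ ∀ k, |x k| ≤ 1})
            ≤ μH[(m : ℝ)] (f '' {x : E (m+1) | x j = 1 ∧ ∀ k, |x k| ≤ 1}) +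
              μH[(m : ℝ)] (f '' {x : E (m+1) | x j = -1 ∧ ∀ k, |x k| ≤ 1}) := measure_union_le _ _
          _ < ⊤ := ENNReal.add_lt_top.2
              ⟨himg j 1 (by norm_num), himg j (-1) (by norm_num)⟩

end Aux3


namespace AuxMain
open Aux Aux2 Aux3

variable {n : ℕ}

lemma integrableOn_log_suppFn (hn : 2 ≤ n) {K : Set (E n)} {R ε : ℝ}
    (hK : K ⊆ Metric.closedBall 0 R) (hne : K.Nonempty) (hε : 0 < ε)
    (hball : Metric.ball (0 : E n) ε ⊆ K) :
    IntegrableOn (fun v => Real.log (suppFn K v)) (sph n) (hm n) := by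
  have hfin : hm n (sph n) < ⊤ := Aux3.hm_sph_lt_top hn
  have hmeas : MeasurableSet (sph n) := Metric.isClosed_sphere.measurableSet
  have hcont := Aux.suppFn_continuous hne hK
  set C := max |Real.log (ε / 2)| |Real.log R| with hC
  refine Integrable.mono' (g := fun _ => C) (integrableOn_const hfin.ne)
    ((Real.measurable_log.comp hcont.measurable).aestronglyMeasurable) ?_
  rw [ae_restrict_iff' hmeas]
  refine ae_of_all _ fun v hv => ?_
  have hv1 : ‖v‖ = 1 := by simpa [sph] using hv
  have h1 : ε / 2 ≤ suppFn K v := Aux.ball_le_suppFn hK hε hball hv1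
  have h2 : suppFn K v ≤ R := Aux.suppFn_le_of_sphere hne hK hv1
  have hε2 : (0:ℝ) < ε / 2 := by linarith
  rw [Real.norm_eq_abs, abs_le]
  constructor
  · calc -C ≤ -|Real.log (ε / 2)| := neg_le_neg (le_max_left _ _)
      _ ≤ Real.log (ε / 2) := neg_abs_le _
      _ ≤ Real.log (suppFn K v) := Real.log_le_log hε2 h1
  · calc Real.log (suppFn K v) ≤ Real.log R := Real.log_le_log (by linarith) h2
      _ ≤ |Real.log R| := le_abs_self _
      _ ≤ C := le_max_right _ _

lemma span_smul_top {N : ℕ} {u : Fin N → E n} {ρ : Fin N → ℝ}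
    (hρ : ∀ i, 0 < ρ i) (hspan : Submodule.span ℝ (Set.range u) = ⊤) :
    Submodule.span ℝ (Set.range fun i => ρ i • u i) = ⊤ := by
  rw [eq_top_iff, ← hspan]
  rw [Submodule.span_le]
  rintro _ ⟨i, rfl⟩
  have : u i = (ρ i)⁻¹ • (ρ i • u i) := by
    rw [smul_smul, inv_mul_cancel₀ (ne_of_gt (hρ i)), one_smul]
  rw [this]
  exact Submodule.smul_mem _ _ (Submodule.subset_span ⟨i, rfl⟩)

end AuxMain

/-- replacing an origin-symmetric convex body `Q` by the polytope
`Q̃ = conv{±ρ_Q(u_i)u_i} ∈ D_μ` decreases support functions, increases the radial values at the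
`u_i`, hence increases `Φ`; consequently the sup of `Φ` over `D_μ` equals the sup over all
origin-symmetric convex bodies containing the origin in their interiors. -/
theorem phi_sup_over_Dmu {n N : ℕ} (hn : 2 ≤ n) (hN : 0 < N)
    (p : ℝ) (hp : p ≠ 0)
    (u : Fin N → E n) (hu : ∀ i, u i ∈ sph n)
    (hspan : Submodule.span ℝ (Set.range u) = ⊤)
    (w : Fin N → ℝ) (hw : ∀ i, 0 < w i) :
    (∀ Q : Set (E n), IsCompact Q → Convex ℝ Q → Q = -Q → 0 ∈ interior Q →
      (convexHull ℝ (⋃ i, ({radFn Q (u i) • u i, -(radFn Q (u i) • u i)} : Set (E n)))) ∈ Dmu u ∧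
      (∀ v ∈ sph n,
        suppFn (convexHull ℝ (⋃ i, ({radFn Q (u i) • u i, -(radFn Q (u i) • u i)} : Set (E n)))) v
          ≤ suppFn Q v) ∧
      (∀ i : Fin N, radFn Q (u i) ≤
        radFn (convexHull ℝ (⋃ i, ({radFn Q (u i) • u i, -(radFn Q (u i) • u i)} : Set (E n))))
          (u i)) ∧
      Phi p u w Q ≤
        Phi p u w
          (convexHull ℝ (⋃ i, ({radFn Q (u i) • u i, -(radFn Q (u i) • u i)} : Set (E n))))) ∧
    sSup (Phi p u w '' Dmu u) =
      sSup (Phi p u w ''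
        {Q : Set (E n) | IsCompact Q ∧ Convex ℝ Q ∧ Q = -Q ∧ 0 ∈ interior Q}) := by
  haveI : NeZero N := ⟨hN.ne'⟩
  have hunorm : ∀ i, ‖u i‖ = 1 := fun i => by simpa [sph] using hu i
  have i0 : Fin N := ⟨0, hN⟩
  have hmeas : MeasurableSet (sph n) := Metric.isClosed_sphere.measurableSet
  -- the main pointwise statement
  have main : ∀ Q : Set (E n), IsCompact Q → Convex ℝ Q → Q = -Q → 0 ∈ interior Q →
      (convexHull ℝ (⋃ i, ({radFn Q (u i) • u i, -(radFn Q (u i) • u i)} : Set (E n)))) ∈ Dmu u ∧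
      (∀ v ∈ sph n,
        suppFn (convexHull ℝ (⋃ i, ({radFn Q (u i) • u i, -(radFn Q (u i) • u i)} : Set (E n)))) v
          ≤ suppFn Q v) ∧
      (∀ i : Fin N, radFn Q (u i) ≤
        radFn (convexHull ℝ (⋃ i, ({radFn Q (u i) • u i, -(radFn Q (u i) • u i)} : Set (E n))))
          (u i)) ∧
      Phi p u w Q ≤
        Phi p u w
          (convexHull ℝ (⋃ i, ({radFn Q (u i) • u i, -(radFn Q (u i) • u i)} : Set (E n)))) := by
    intro Q hQc hQconv hQsym hQ0
    set T := convexHull ℝ (⋃ i, ({radFn Q (u i) • u i, -(radFn Q (u i) • u i)} : Set (E n)))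
      with hTdef
    obtain ⟨R, hR⟩ := hQc.isBounded.subset_closedBall 0
    have hapos : ∀ i, 0 < radFn Q (u i) := fun i => Aux.radFn_pos hR (hunorm i) hQ0
    have h0Q : (0 : E n) ∈ Q := interior_subset hQ0
    have hmemQ : ∀ i, radFn Q (u i) • u i ∈ Q := fun i =>
      Aux.radFn_smul_mem hQc.isClosed hR (hunorm i) h0Q
    have hmemQ' : ∀ i, -(radFn Q (u i) • u i) ∈ Q := by
      intro i
      have h := Set.neg_mem_neg.2 (hmemQ i)
      rwa [← hQsym] at h
    have hTsubQ : T ⊆ Q := by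
      rw [hTdef]
      refine convexHull_min (Set.iUnion_subset fun i => ?_) hQconv
      rintro z (rfl | rfl)
      · exact hmemQ i
      · exact hmemQ' i
    have hTne : T.Nonempty :=
      ⟨radFn Q (u i0) • u i0,
        subset_convexHull ℝ _ (Set.mem_iUnion.2 ⟨i0, Or.inl rfl⟩)⟩
    have hQne : Q.Nonempty := ⟨0, h0Q⟩
    have hTcb : T ⊆ Metric.closedBall 0 R := hTsubQ.trans hR
    have hT0 : (0 : E n) ∈ interior T :=
      Aux2.zero_mem_interior_hull hN (fun i => radFn Q (u i) • u i)
        (AuxMain.span_smul_top hapos hspan)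
    have hrad : ∀ i, radFn Q (u i) ≤ radFn T (u i) := fun i =>
      Aux.le_radFn hTcb (hunorm i) (hapos i).le
        (subset_convexHull ℝ _ (Set.mem_iUnion.2 ⟨i, Or.inl rfl⟩))
    have hsupp : ∀ v, suppFn T v ≤ suppFn Q v := fun v =>
      Aux.suppFn_mono hTsubQ hTne hR v
    have hDmuT : T ∈ Dmu u := ⟨fun i => radFn Q (u i), hapos, hTdef⟩
    -- entropy comparison
    obtain ⟨εQ, hεQ, hballQ⟩ := Metric.isOpen_iff.1 isOpen_interior 0 hQ0
    obtain ⟨εT, hεT, hballT⟩ := Metric.isOpen_iff.1 isOpen_interior 0 hT0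
    have hballQ' : Metric.ball (0 : E n) εQ ⊆ Q := hballQ.trans interior_subset
    have hballT' : Metric.ball (0 : E n) εT ⊆ T := hballT.trans interior_subset
    have hIQ : IntegrableOn (fun v => Real.log (suppFn Q v)) (sph n) (hm n) :=
      AuxMain.integrableOn_log_suppFn hn hR hQne hεQ hballQ'
    have hIT : IntegrableOn (fun v => Real.log (suppFn T v)) (sph n) (hm n) :=
      AuxMain.integrableOn_log_suppFn hn hTcb hTne hεT hballT'
    have hint : ∫ v in sph n, Real.log (suppFn T v) ∂(hm n)
        ≤ ∫ v in sph n, Real.log (suppFn Q v) ∂(hm n) := by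
      refine setIntegral_mono_on hIT hIQ hmeas fun v hv => ?_
      have hv1 : ‖v‖ = 1 := by simpa [sph] using hv
      exact Real.log_le_log (lt_of_lt_of_le (by linarith)
        (Aux.ball_le_suppFn hTcb hεT hballT' hv1)) (hsupp v)
    have hent : entropy Q ≤ entropy T := neg_le_neg hint
    -- coefficient positivity
    have hc0 : (0:ℝ) ≤ 1 / (n * ballVol n) := by
      have h1 : (0:ℝ) < ballVol n := by
        refine ENNReal.toReal_pos ?_ ?_
        · exact (Metric.measure_ball_pos volume (0 : E n) one_pos).ne'
        · exact measure_ball_lt_top.ne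
      have h2 : (0:ℝ) < (n : ℝ) := by positivity
      positivity
    have hentc : (1 / (n * ballVol n)) * entropy Q ≤ (1 / (n * ballVol n)) * entropy T :=
      mul_le_mul_of_nonneg_left hent hc0
    -- sum comparison
    have hbpos : ∀ i, 0 < radFn T (u i) := fun i => lt_of_lt_of_le (hapos i) (hrad i)
    have hterm : (1 / p) * Real.log (2 * ∑ i, radFn T (u i) ^ (-p) * w i)
        ≤ (1 / p) * Real.log (2 * ∑ i, radFn Q (u i) ^ (-p) * w i) := by
      have hSQpos : (0:ℝ) < ∑ i, radFn Q (u i) ^ (-p) * w i :=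
        Finset.sum_pos (fun i _ => mul_pos (Real.rpow_pos_of_pos (hapos i) _) (hw i))
          Finset.univ_nonempty
      have hSTpos : (0:ℝ) < ∑ i, radFn T (u i) ^ (-p) * w i :=
        Finset.sum_pos (fun i _ => mul_pos (Real.rpow_pos_of_pos (hbpos i) _) (hw i))
          Finset.univ_nonempty
      rcases lt_or_gt_of_ne hp with hplt | hpgt
      · -- p < 0, so -p > 0, terms increase, 1/p < 0 flips
        have hsum : (∑ i, radFn Q (u i) ^ (-p) * w i) ≤ ∑ i, radFn T (u i) ^ (-p) * w i := by
          refine Finset.sum_le_sum fun i _ => ?_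
          exact mul_le_mul_of_nonneg_right
            (Real.rpow_le_rpow (hapos i).le (hrad i) (by linarith)) (hw i).le
        have hlog : Real.log (2 * ∑ i, radFn Q (u i) ^ (-p) * w i)
            ≤ Real.log (2 * ∑ i, radFn T (u i) ^ (-p) * w i) :=
          Real.log_le_log (by linarith) (by linarith)
        have h1p : (1 / p) ≤ 0 := by
          apply div_nonpos_of_nonneg_of_nonpos <;> linarith
        exact mul_le_mul_of_nonpos_left hlog h1p
      · -- p > 0, so -p < 0, terms decrease, 1/p > 0
        have hsum : (∑ i, radFn T (u i) ^ (-p) * w i) ≤ ∑ i, radFn Q (u i) ^ (-p) * w i := by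
          refine Finset.sum_le_sum fun i _ => ?_
          exact mul_le_mul_of_nonneg_right
            (Real.rpow_le_rpow_of_nonpos (hapos i) (hrad i) (by linarith)) (hw i).le
        have hlog : Real.log (2 * ∑ i, radFn T (u i) ^ (-p) * w i)
            ≤ Real.log (2 * ∑ i, radFn Q (u i) ^ (-p) * w i) :=
          Real.log_le_log (by linarith) (by linarith)
        have h1p : (0:ℝ) ≤ 1 / p := by positivity
        exact mul_le_mul_of_nonneg_left hlog h1p
    refine ⟨hDmuT, fun v _ => hsupp v, hrad, ?_⟩
    unfold Phi
    exact sub_le_sub hentc hterm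
  refine ⟨main, ?_⟩
  -- sup equality
  set Bodies : Set (Set (E n)) :=
    {Q : Set (E n) | IsCompact Q ∧ Convex ℝ Q ∧ Q = -Q ∧ 0 ∈ interior Q} with hBodies
  have hDsub : Dmu u ⊆ Bodies := by
    rintro Q ⟨ρ, hρ, rfl⟩
    have hfin : (⋃ i, ({ρ i • u i, -(ρ i • u i)} : Set (E n))).Finite :=
      Set.finite_iUnion fun i => (Set.finite_singleton _).insert _
    refine ⟨hfin.isCompact_convexHull ℝ, convex_convexHull ℝ _, ?_, ?_⟩
    · exact (Aux.symm_hull_neg (fun i => ρ i • u i)).symm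
    · exact Aux2.zero_mem_interior_hull hN (fun i => ρ i • u i)
        (AuxMain.span_smul_top hρ hspan)
  have hAne : (Phi p u w '' Dmu u).Nonempty :=
    ⟨_, Set.mem_image_of_mem _ ⟨fun _ => (1:ℝ), fun _ => one_pos, rfl⟩⟩
  have hdom : ∀ y ∈ Phi p u w '' Bodies, ∃ z ∈ Phi p u w '' Dmu u, y ≤ z := by
    rintro _ ⟨Q, ⟨h1, h2, h3, h4⟩, rfl⟩
    obtain ⟨hD, -, -, hle⟩ := main Q h1 h2 h3 h4
    exact ⟨_, Set.mem_image_of_mem _ hD, hle⟩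
  have hBne : (Phi p u w '' Bodies).Nonempty := hAne.mono (Set.image_mono hDsub)
  by_cases hbdd : BddAbove (Phi p u w '' Dmu u)
  · have hbddB : BddAbove (Phi p u w '' Bodies) := by
      obtain ⟨M, hM⟩ := hbdd
      refine ⟨M, fun y hy => ?_⟩
      obtain ⟨z, hz, hyz⟩ := hdom y hy
      exact hyz.trans (hM hz)
    apply le_antisymm
    · exact csSup_le_csSup hbddB hAne (Set.image_mono hDsub)
    · refine csSup_le hBne fun y hy => ?_
      obtain ⟨z, hz, hyz⟩ := hdom y hy
      exact hyz.trans (le_csSup hbdd hz)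
  · have hbddB : ¬ BddAbove (Phi p u w '' Bodies) := fun h =>
      hbdd (BddAbove.mono (Set.image_mono hDsub) h)
    rw [Real.sSup_of_not_bddAbove hbdd, Real.sSup_of_not_bddAbove hbddB]
end
end

section
/- Let n ≥ 2 and let u_1,…,u_N ∈ S^{n−1} be unit vectors that span ℝ^n. Let 1 ≤ s ≤ N−1 be such that S = span{u_1,…,u_s} is a proper subspace of ℝ^n. Define f : S^{n−1} → ℝ by f(v) = max_{s+1 ≤ i ≤ N} |v·u_i|. Then there exist constants c ∈ (0,1) and δ_0 ∈ (0,π/2) such that f(v) ≥ c for every v ∈ S^{n−1} whose angle φ(v) to S satisfies φ(v) > π/2 − δ_0. -/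
open MeasureTheory Real Filter
open scoped InnerProductSpace ENNReal Topology Pointwise

set_option maxHeartbeats 2000000

noncomputable section

/-- Lemma 4.2: if `u_1,…,u_N` span `ℝ^n` and `S = span{u_1,…,u_s}` is a proper
subspace, then `f(v) = max_{i > s} |v·u_i|` is bounded below by some `c ∈ (0,1)` for all unit
vectors `v` whose angle `φ(v)` to `S` exceeds `π/2 − δ₀`. -/
theorem max_inner_lower_bound {n N : ℕ} (hn : 2 ≤ n)
    (u : Fin N → E n) (hu : ∀ i, u i ∈ sph n)
    (hspan : Submodule.span ℝ (Set.range u) = ⊤)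
    (s : ℕ) (hs1 : 1 ≤ s) (hs2 : s ≤ N - 1)
    (S : Submodule ℝ (E n)) (hS : S = Submodule.span ℝ (u '' {i | (i : ℕ) < s}))
    (hSproper : S ≠ ⊤) :
    ∃ c ∈ Set.Ioo (0 : ℝ) 1, ∃ δ0 ∈ Set.Ioo (0 : ℝ) (π / 2),
      ∀ v ∈ sph n, π / 2 - δ0 < Real.arccos ‖(S.orthogonalProjection v : E n)‖ →
        ∃ i : Fin N, s ≤ (i : ℕ) ∧ c ≤ |⟪v, u i⟫_ℝ| := by
  classical
  have hsN : s < N := by omega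
  set I : Finset (Fin N) := Finset.univ.filter (fun i => s ≤ (i : ℕ)) with hI
  have hImem : (⟨s, hsN⟩ : Fin N) ∈ I := by simp [hI]
  -- K : unit vectors in Sᗮ
  set K : Set (E n) := Metric.sphere (0 : E n) 1 ∩ (Sᗮ : Set (E n)) with hK
  have hKc : IsCompact K :=
    (isCompact_sphere _ _).inter_right (Submodule.closed_of_finiteDimensional _)
  have hKne : K.Nonempty := by
    have hbot : Sᗮ ≠ ⊥ := fun h => hSproper (Submodule.orthogonal_eq_bot_iff.mp h)
    obtain ⟨x, hxS, hx0⟩ := Submodule.exists_mem_ne_zero_of_ne_bot hbot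
    refine ⟨‖x‖⁻¹ • x, ?_, Submodule.smul_mem _ _ hxS⟩
    simp only [mem_sphere_zero_iff_norm]
    exact norm_smul_inv_norm hx0
  -- the function h = sum of squares of inner products with u i, i ≥ s
  set h : E n → ℝ := fun w => ∑ i ∈ I, (⟪w, u i⟫_ℝ) ^ 2 with hh
  have hcont : Continuous h := by
    apply continuous_finset_sum
    intro i _
    exact (continuous_id.inner continuous_const).pow 2
  have hpos : ∀ w ∈ K, 0 < h w := by
    intro w hwK
    rcases eq_or_lt_of_le (Finset.sum_nonneg (fun i (_ : i ∈ I) => sq_nonneg (⟪w, u i⟫_ℝ)))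
      with heq | hlt
    · exfalso
      have hz : ∀ i ∈ I, (⟪w, u i⟫_ℝ) ^ 2 = 0 :=
        (Finset.sum_eq_zero_iff_of_nonneg (fun i _ => sq_nonneg _)).mp heq.symm
      have hall : ∀ i : Fin N, ⟪w, u i⟫_ℝ = 0 := by
        intro i
        by_cases hi : s ≤ (i : ℕ)
        · exact pow_eq_zero_iff (by norm_num) |>.mp (hz i (by simp [hI, hi]))
        · have hiu : u i ∈ S := by
            rw [hS]
            exact Submodule.subset_span ⟨i, by simpa using Nat.lt_of_not_le hi, rfl⟩
          have := (Submodule.mem_orthogonal S w).mp hwK.2 (u i) hiu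
          rwa [real_inner_comm] at this
      have hWtop : w ∈ (Submodule.span ℝ (Set.range u))ᗮ := by
        rw [Submodule.mem_orthogonal']
        intro y hy
        induction hy using Submodule.span_induction with
        | mem y hy => obtain ⟨i, rfl⟩ := hy; exact hall i
        | zero => exact inner_zero_right w
        | add y z _ _ hy hz => rw [inner_add_right, hy, hz, add_zero]
        | smul a y _ hy => rw [real_inner_smul_right, hy, mul_zero]
      rw [hspan, Submodule.top_orthogonal_eq_bot, Submodule.mem_bot] at hWtop
      have : ‖w‖ = 1 := mem_sphere_zero_iff_norm.mp hwK.1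
      rw [hWtop, norm_zero] at this
      norm_num at this
    · exact hlt
  obtain ⟨w₀, hw₀K, hminOn⟩ := hKc.exists_isMinOn hKne hcont.continuousOn
  set m' : ℝ := h w₀ with hm'
  have hm'pos : 0 < m' := hpos _ hw₀K
  set m : ℝ := Real.sqrt (m' / N) with hmdef
  have hmpos : 0 < m := Real.sqrt_pos.mpr (div_pos hm'pos (by exact_mod_cast Nat.pos_of_ne_zero (by omega)))
  set t : ℝ := min (m / 8) (1 / 8) with ht
  have htpos : 0 < t := lt_min (by positivity) (by norm_num)
  have htle : t ≤ 1 / 8 := min_le_right _ _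
  have htm : t ≤ m / 8 := min_le_left _ _
  set δ0 : ℝ := Real.arcsin t with hδ0
  have hδ0pos : 0 < δ0 := Real.arcsin_pos.mpr htpos
  have hδ0lt : δ0 < π / 2 := Real.arcsin_lt_pi_div_two.mpr (by linarith)
  have hsinδ : Real.sin δ0 = t := Real.sin_arcsin (by linarith) (by linarith)
  refine ⟨min (m / 2) (1 / 2), ⟨lt_min (by positivity) (by norm_num),
    lt_of_le_of_lt (min_le_right _ _) (by norm_num)⟩, δ0, ⟨hδ0pos, hδ0lt⟩, ?_⟩
  intro v hv hang
  have hvn : ‖v‖ = 1 := mem_sphere_zero_iff_norm.mp hv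
  set Pv : E n := (S.orthogonalProjection v : E n) with hPv
  -- ‖Pv‖ ≤ 1
  have hPvle : ‖Pv‖ ≤ 1 := by
    have := S.orthogonalProjectionOnto_norm_le
    calc ‖Pv‖ ≤ ‖S.orthogonalProjection‖ * ‖v‖ := (S.orthogonalProjection).le_opNorm v
    _ ≤ 1 * 1 := by
        apply mul_le_mul this (le_of_eq hvn) (norm_nonneg _) zero_le_one
    _ = 1 := by norm_num
  -- ‖Pv‖ < t
  have hPvlt : ‖Pv‖ < t := by
    have h1 : ‖Pv‖ = Real.cos (Real.arccos ‖Pv‖) :=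
      (Real.cos_arccos (by linarith [norm_nonneg Pv]) hPvle).symm
    have h2 : Real.cos (Real.arccos ‖Pv‖) < Real.cos (π / 2 - δ0) := by
      apply Real.strictAntiOn_cos ⟨by linarith, by linarith [Real.pi_pos]⟩
        ⟨Real.arccos_nonneg _, Real.arccos_le_pi _⟩ hang
    rw [Real.cos_pi_div_two_sub, hsinδ] at h2
    linarith [h1 ▸ h2]
  set w : E n := v - Pv with hw
  have hwSperp : w ∈ Sᗮ := S.sub_starProjection_mem_orthogonal v
  have hPvS : Pv ∈ S := (S.orthogonalProjection v).2
  have hinner0 : ⟪Pv, w⟫_ℝ = 0 := Submodule.inner_right_of_mem_orthogonal hPvS hwSperp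
  have hvsum : v = Pv + w := by rw [hw]; abel
  have hpyth : ‖Pv‖ ^ 2 + ‖w‖ ^ 2 = 1 := by
    have := norm_add_sq_real Pv w
    rw [← hvsum, hvn, hinner0] at this
    nlinarith
  have hwnorm : (3 : ℝ) / 4 ≤ ‖w‖ := by
    nlinarith [norm_nonneg w, norm_nonneg Pv, hPvlt, htle]
  have hwne : w ≠ 0 := by
    intro h0
    rw [h0, norm_zero] at hwnorm
    norm_num at hwnorm
  set w' : E n := ‖w‖⁻¹ • w with hw'
  have hw'K : w' ∈ K := by
    constructor
    · simp only [mem_sphere_zero_iff_norm]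
      exact norm_smul_inv_norm hwne
    · exact Submodule.smul_mem _ _ hwSperp
  have hle : m' ≤ h w' := hminOn hw'K
  -- pick i with large inner product
  have hex : ∃ i ∈ I, m' / N ≤ (⟪w', u i⟫_ℝ) ^ 2 := by
    by_contra hcon
    push_neg at hcon
    have : h w' < ∑ _i ∈ I, m' / N :=
      Finset.sum_lt_sum_of_nonempty ⟨_, hImem⟩ hcon
    rw [Finset.sum_const, nsmul_eq_mul] at this
    have hcard : (I.card : ℝ) ≤ N := by
      exact_mod_cast le_trans (Finset.card_le_card (Finset.subset_univ I)) (by simp)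
    have hNpos : (0 : ℝ) < N := by exact_mod_cast Nat.pos_of_ne_zero (by omega)
    have : h w' < m' := by
      calc h w' < I.card * (m' / N) := this
      _ ≤ N * (m' / N) := by
          apply mul_le_mul_of_nonneg_right hcard (le_of_lt (div_pos hm'pos hNpos))
      _ = m' := by field_simp
    linarith
  obtain ⟨i, hiI, hi2⟩ := hex
  have hiS : s ≤ (i : ℕ) := by simpa [hI] using hiI
  refine ⟨i, hiS, ?_⟩
  have hmle : m ≤ |⟪w', u i⟫_ℝ| := by
    rw [hmdef, ← Real.sqrt_sq_eq_abs]
    exact Real.sqrt_le_sqrt hi2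
  have hui : ‖u i‖ = 1 := mem_sphere_zero_iff_norm.mp (hu i)
  have hPvin : |⟪Pv, u i⟫_ℝ| ≤ ‖Pv‖ := by
    calc |⟪Pv, u i⟫_ℝ| ≤ ‖Pv‖ * ‖u i‖ := abs_real_inner_le_norm _ _
    _ = ‖Pv‖ := by rw [hui, mul_one]
  have hwin : ⟪w, u i⟫_ℝ = ‖w‖ * ⟪w', u i⟫_ℝ := by
    have : w = ‖w‖ • w' := by
      rw [hw', smul_smul, mul_inv_cancel₀ (norm_ne_zero_iff.mpr hwne), one_smul]
    conv_lhs => rw [this]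
    rw [real_inner_smul_left]
  have hvin : ⟪v, u i⟫_ℝ = ⟪Pv, u i⟫_ℝ + ⟪w, u i⟫_ℝ := by
    conv_lhs => rw [hvsum]
    rw [inner_add_left]
  have habs : ‖w‖ * |⟪w', u i⟫_ℝ| - |⟪Pv, u i⟫_ℝ| ≤ |⟪v, u i⟫_ℝ| := by
    rw [hvin, hwin]
    calc ‖w‖ * |⟪w', u i⟫_ℝ| - |⟪Pv, u i⟫_ℝ|
        = |‖w‖ * ⟪w', u i⟫_ℝ| - |⟪Pv, u i⟫_ℝ| := by
          rw [abs_mul, abs_of_nonneg (norm_nonneg w)]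
    _ ≤ |⟪Pv, u i⟫_ℝ + ‖w‖ * ⟪w', u i⟫_ℝ| := by
          have := abs_add' (‖w‖ * ⟪w', u i⟫_ℝ) (⟪Pv, u i⟫_ℝ)
          linarith
  have hfin : min (m / 2) (1 / 2) ≤ m / 2 := min_le_left _ _
  have : m / 2 ≤ |⟪v, u i⟫_ℝ| := by
    nlinarith [hmle, hPvin, hPvlt, htm, hwnorm, abs_nonneg (⟪w', u i⟫_ℝ), hmpos]
  linarith
end
end

section
/- Let n ≥ 2, 1 ≤ k ≤ n−1, R ≥ 1, and c ∈ (0,1). For t ∈ (0,1) define g_1(t) = −log t · ∫_{arccos(ct/R)}^{π/2} cos^{k−1}φ sin^{n−k−1}φ dφ − log R · (arccos(ct/R) − arccos t) + ∫_{arccos t}^{π/2} log(cos φ) cos^{k−1}φ sin^{n−k−1}φ dφ. Then lim_{t→0^+} g_1(t) = 0. -/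
open MeasureTheory Real Filter
open scoped InnerProductSpace ENNReal Topology Pointwise

noncomputable section

lemma aux_neg_log_le {x : ℝ} (hx : 0 < x) : -Real.log x ≤ 2 / Real.sqrt x := by
  have hs : 0 < Real.sqrt x := Real.sqrt_pos.2 hx
  have h := Real.log_le_sub_one_of_pos (show (0:ℝ) < (Real.sqrt x)⁻¹ by positivity)
  rw [Real.log_inv, Real.log_sqrt hx.le] at h
  rw [div_eq_mul_inv]
  have : (1:ℝ) ≤ 1 := le_refl 1
  nlinarith [inv_nonneg.2 hs.le]

lemma aux_arcsin_le {x : ℝ} (hx : 0 ≤ x) (hx1 : x ≤ 1) : Real.arcsin x ≤ π / 2 * x := by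
  have hπ := Real.pi_pos
  have h0 : 0 ≤ Real.arcsin x := Real.arcsin_nonneg.2 hx
  have h1 : Real.arcsin x ≤ π / 2 := Real.arcsin_le_pi_div_two x
  have h := Real.mul_le_sin h0 h1
  rw [Real.sin_arcsin (by linarith) hx1] at h
  calc Real.arcsin x = π / 2 * (2 / π * Real.arcsin x) := by field_simp
    _ ≤ π / 2 * x := by nlinarith

/-- the calculus fact `g₁(t) → 0` as `t → 0⁺`. -/
theorem g1_tendsto_zero (n k : ℕ) (hn : 2 ≤ n) (hk1 : 1 ≤ k) (hk2 : k ≤ n - 1)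
    (R : ℝ) (hR : 1 ≤ R) (c : ℝ) (hc : c ∈ Set.Ioo (0 : ℝ) 1) :
    Tendsto (fun t : ℝ =>
        -Real.log t *
            (∫ φ in Real.arccos (c * t / R)..(π / 2),
              Real.cos φ ^ (k - 1) * Real.sin φ ^ (n - k - 1)) -
          Real.log R * (Real.arccos (c * t / R) - Real.arccos t) +
          ∫ φ in Real.arccos t..(π / 2),
            Real.log (Real.cos φ) * (Real.cos φ ^ (k - 1) * Real.sin φ ^ (n - k - 1)))
      (𝓝[>] (0 : ℝ)) (𝓝 0) := by
  obtain ⟨hc0, hc1⟩ := hc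
  have hπ := Real.pi_pos
  have hR0 : (0:ℝ) < R := lt_of_lt_of_le one_pos hR
  have hpi2 : (0:ℝ) ≤ π / 2 := by linarith
  have hmem : Set.Ioo (0:ℝ) 1 ∈ 𝓝[>] (0:ℝ) :=
    Ioo_mem_nhdsGT (by norm_num : (0:ℝ) < 1)
  -- Part A : first term tends to 0
  have hA : Tendsto (fun t : ℝ =>
      -Real.log t * ∫ φ in Real.arccos (c * t / R)..(π / 2),
        Real.cos φ ^ (k - 1) * Real.sin φ ^ (n - k - 1)) (𝓝[>] (0:ℝ)) (𝓝 0) := by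
    have hbound : Tendsto (fun t : ℝ => π / 2 * -(Real.log t * t)) (𝓝[>] (0:ℝ)) (𝓝 0) := by
      have h := (tendsto_log_mul_rpow_nhdsGT_zero (r := 1) one_pos)
      simp only [Real.rpow_one] at h
      have := (h.neg.const_mul (π / 2))
      simpa using this
    refine squeeze_zero' ?_ ?_ hbound
    · filter_upwards [hmem] with t ht
      obtain ⟨ht0, ht1⟩ := ht
      have hlog : Real.log t ≤ 0 := Real.log_nonpos ht0.le ht1.le
      have hx0 : 0 ≤ c * t / R := by positivity
      have hle : Real.arccos (c * t / R) ≤ π / 2 := Real.arccos_le_pi_div_two.2 hx0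
      refine mul_nonneg (by linarith) ?_
      refine intervalIntegral.integral_nonneg hle ?_
      intro φ hφ
      have h0 : 0 ≤ φ := le_trans (Real.arccos_nonneg _) hφ.1
      have hcos : 0 ≤ Real.cos φ := Real.cos_nonneg_of_mem_Icc ⟨by linarith, hφ.2⟩
      have hsin : 0 ≤ Real.sin φ := Real.sin_nonneg_of_nonneg_of_le_pi h0 (by linarith [hφ.2])
      positivity
    · filter_upwards [hmem] with t ht
      obtain ⟨ht0, ht1⟩ := ht
      have hlog : Real.log t ≤ 0 := Real.log_nonpos ht0.le ht1.le
      have hx0 : 0 ≤ c * t / R := by positivity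
      have hxt : c * t / R ≤ t := by
        rw [div_le_iff₀ hR0]; nlinarith
      have hx1 : c * t / R ≤ 1 := le_trans hxt ht1.le
      have hle : Real.arccos (c * t / R) ≤ π / 2 := Real.arccos_le_pi_div_two.2 hx0
      have hI : (∫ φ in Real.arccos (c * t / R)..(π / 2),
          Real.cos φ ^ (k - 1) * Real.sin φ ^ (n - k - 1)) ≤ π / 2 * t := by
        have hImono : (∫ φ in Real.arccos (c * t / R)..(π / 2),
            Real.cos φ ^ (k - 1) * Real.sin φ ^ (n - k - 1)) ≤
            ∫ _ in Real.arccos (c * t / R)..(π / 2), (1:ℝ) := by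
          refine intervalIntegral.integral_mono_on hle ?_ ?_ ?_
          · exact ((Real.continuous_cos.pow _).mul (Real.continuous_sin.pow _)).intervalIntegrable _ _
          · exact intervalIntegrable_const
          · intro φ hφ
            have h0 : 0 ≤ φ := le_trans (Real.arccos_nonneg _) hφ.1
            have hcos : 0 ≤ Real.cos φ := Real.cos_nonneg_of_mem_Icc ⟨by linarith, hφ.2⟩
            have hsin : 0 ≤ Real.sin φ :=
              Real.sin_nonneg_of_nonneg_of_le_pi h0 (by linarith [hφ.2])
            have h1 : Real.cos φ ^ (k - 1) ≤ 1 := pow_le_one₀ hcos (Real.cos_le_one φ)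
            have h2 : Real.sin φ ^ (n - k - 1) ≤ 1 := pow_le_one₀ hsin (Real.sin_le_one φ)
            calc Real.cos φ ^ (k - 1) * Real.sin φ ^ (n - k - 1)
                ≤ 1 * 1 := by
                  exact mul_le_mul h1 h2 (by positivity) (by norm_num)
              _ = 1 := by norm_num
        have hconst : (∫ _ in Real.arccos (c * t / R)..(π / 2), (1:ℝ)) =
            π / 2 - Real.arccos (c * t / R) := by simp
        have harcsin : π / 2 - Real.arccos (c * t / R) = Real.arcsin (c * t / R) := by
          rw [Real.arccos_eq_pi_div_two_sub_arcsin]; ring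
        have h3 : Real.arcsin (c * t / R) ≤ π / 2 * (c * t / R) := aux_arcsin_le hx0 hx1
        have h4 : π / 2 * (c * t / R) ≤ π / 2 * t := by nlinarith
        linarith [hImono, hconst ▸ hImono]
      calc -Real.log t * ∫ φ in Real.arccos (c * t / R)..(π / 2),
              Real.cos φ ^ (k - 1) * Real.sin φ ^ (n - k - 1)
          ≤ -Real.log t * (π / 2 * t) := by
            exact mul_le_mul_of_nonneg_left hI (by linarith)
        _ = π / 2 * -(Real.log t * t) := by ring
  -- Part B : second term tends to 0
  have hB : Tendsto (fun t : ℝ =>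
      Real.log R * (Real.arccos (c * t / R) - Real.arccos t)) (𝓝[>] (0:ℝ)) (𝓝 0) := by
    have hcont : Continuous (fun t : ℝ =>
        Real.log R * (Real.arccos (c * t / R) - Real.arccos t)) := by
      exact continuous_const.mul
        ((Real.continuous_arccos.comp (by continuity)).sub Real.continuous_arccos)
    have h : Tendsto (fun t : ℝ =>
        Real.log R * (Real.arccos (c * t / R) - Real.arccos t)) (𝓝[>] (0:ℝ))
        (𝓝 (Real.log R * (Real.arccos (c * 0 / R) - Real.arccos 0))) :=
      (hcont.tendsto 0).mono_left nhdsWithin_le_nhds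
    simpa using h
  -- Part C : third term tends to 0
  have hC : Tendsto (fun t : ℝ =>
      ∫ φ in Real.arccos t..(π / 2),
        Real.log (Real.cos φ) * (Real.cos φ ^ (k - 1) * Real.sin φ ^ (n - k - 1)))
      (𝓝[>] (0:ℝ)) (𝓝 0) := by
    set f : ℝ → ℝ := fun φ =>
      Real.log (Real.cos φ) * (Real.cos φ ^ (k - 1) * Real.sin φ ^ (n - k - 1)) with hf
    set g : ℝ → ℝ := fun φ => 2 * ((2 / π) * (π / 2 - φ)) ^ (-(1/2) : ℝ) with hg
    -- bound : ‖f φ‖ ≤ g φ on [0, π/2]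
    have hfg : ∀ φ ∈ Set.Icc (0:ℝ) (π / 2), ‖f φ‖ ≤ g φ := by
      intro φ hφ
      rcases eq_or_lt_of_le hφ.2 with heq | hlt
      · simp only [hf, hg, heq, Real.cos_pi_div_two, Real.log_zero, zero_mul, norm_zero,
          sub_self, mul_zero]
        rw [Real.zero_rpow (by norm_num)]
        norm_num
      · have hcos : 0 < Real.cos φ := Real.cos_pos_of_mem_Ioo ⟨by linarith [hφ.1], hlt⟩
        have hsin : 0 ≤ Real.sin φ :=
          Real.sin_nonneg_of_nonneg_of_le_pi hφ.1 (by linarith)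
        have hu : 0 < π / 2 - φ := by linarith
        have hjordan : 2 / π * (π / 2 - φ) ≤ Real.cos φ := by
          have := Real.mul_le_sin hu.le (by linarith [hφ.1])
          rwa [Real.sin_pi_div_two_sub] at this
        have h1 : |Real.cos φ ^ (k - 1) * Real.sin φ ^ (n - k - 1)| ≤ 1 := by
          rw [abs_of_nonneg (by positivity)]
          calc Real.cos φ ^ (k - 1) * Real.sin φ ^ (n - k - 1)
              ≤ 1 * 1 := mul_le_mul (pow_le_one₀ hcos.le (Real.cos_le_one φ))
                (pow_le_one₀ hsin (Real.sin_le_one φ)) (by positivity) (by norm_num)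
            _ = 1 := by norm_num
        have h2 : |Real.log (Real.cos φ)| ≤ 2 / Real.sqrt (Real.cos φ) := by
          rw [abs_of_nonpos (Real.log_nonpos hcos.le (Real.cos_le_one φ))]
          exact aux_neg_log_le hcos
        have h3 : 2 / Real.sqrt (Real.cos φ) ≤ 2 / Real.sqrt (2 / π * (π / 2 - φ)) := by
          refine div_le_div_of_nonneg_left (by norm_num) ?_ ?_
          · exact Real.sqrt_pos.2 (by positivity)
          · exact Real.sqrt_le_sqrt hjordan
        have h4 : (2:ℝ) / Real.sqrt (2 / π * (π / 2 - φ)) = g φ := by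
          simp only [hg]
          rw [Real.rpow_neg (by positivity : (0:ℝ) ≤ 2 / π * (π / 2 - φ)),
            ← Real.sqrt_eq_rpow, div_eq_mul_inv]
        calc ‖f φ‖ = |Real.log (Real.cos φ)| * |Real.cos φ ^ (k - 1) * Real.sin φ ^ (n - k - 1)| := by
              rw [hf]; exact abs_mul _ _
          _ ≤ (2 / Real.sqrt (Real.cos φ)) * 1 :=
              mul_le_mul h2 h1 (abs_nonneg _) (by positivity)
          _ = 2 / Real.sqrt (Real.cos φ) := by ring
          _ ≤ 2 / Real.sqrt (2 / π * (π / 2 - φ)) := h3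
          _ = g φ := h4
    -- integrability of g
    have hgi : IntervalIntegrable g volume 0 (π / 2) := by
      have h1 : IntervalIntegrable (fun x : ℝ => x ^ (-(1/2) : ℝ)) volume 0 1 :=
        intervalIntegral.intervalIntegrable_rpow' (by norm_num)
      have h2 : IntervalIntegrable (fun x : ℝ => ((2 / π) * x) ^ (-(1/2) : ℝ)) volume 0 (π / 2) := by
        have := h1.comp_mul_left (c := 2 / π)
        simpa [one_div_div] using this
      have h3 := (h2.comp_sub_left (π / 2)).symm
      rw [hg]
      simpa using h3.const_mul 2
    -- integrability of f
    have hfm : AEStronglyMeasurable f (volume.restrict (Set.uIoc (0:ℝ) (π / 2))) := by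
      refine Measurable.aestronglyMeasurable ?_
      exact (Real.measurable_log.comp Real.continuous_cos.measurable).mul
        ((Real.continuous_cos.measurable.pow_const _).mul
          (Real.continuous_sin.measurable.pow_const _))
    have hfi : IntervalIntegrable f volume 0 (π / 2) := by
      refine hgi.mono_fun' hfm ?_
      rw [Set.uIoc_of_le hpi2]
      refine (MeasureTheory.ae_restrict_mem measurableSet_Ioc).mono ?_
      intro φ hφ
      exact hfg φ ⟨hφ.1.le, hφ.2⟩
    have hfIcc : IntegrableOn f (Set.uIcc (0:ℝ) (π / 2)) volume := by
      rw [Set.uIcc_of_le hpi2, integrableOn_Icc_iff_integrableOn_Ioc]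
      exact (intervalIntegrable_iff_integrableOn_Ioc_of_le hpi2).1 hfi
    have hcont := intervalIntegral.continuousOn_primitive_interval_left hfIcc
    have hcw : ContinuousWithinAt (fun x => ∫ t in x..(π / 2), f t)
        (Set.uIcc (0:ℝ) (π / 2)) (π / 2) := hcont _ Set.right_mem_uIcc
    have harccos : Tendsto (fun t : ℝ => Real.arccos t) (𝓝[>] (0:ℝ))
        (𝓝[Set.uIcc (0:ℝ) (π / 2)] (π / 2)) := by
      rw [tendsto_nhdsWithin_iff]
      constructor
      · have h : Tendsto (fun t : ℝ => Real.arccos t) (𝓝[>] (0:ℝ)) (𝓝 (Real.arccos 0)) :=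
          (Real.continuous_arccos.tendsto 0).mono_left nhdsWithin_le_nhds
        simpa [Real.arccos_zero] using h
      · filter_upwards [hmem] with t ht
        rw [Set.uIcc_of_le hpi2]
        exact ⟨Real.arccos_nonneg t, Real.arccos_le_pi_div_two.2 ht.1.le⟩
    have h := hcw.tendsto.comp harccos
    simpa [intervalIntegral.integral_same, Function.comp_def] using h
  have := (hA.sub hB).add hC
  simpa using this
end
end
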